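/- Under the same CFL hypotheses and nonnegativity of all data, one step of the adapted Lax–Friedrichs scheme satisfies the discrete L¹ bound Δx ∑_{j=1}^N ρ^{n+1}_j ≤ Δx ∑_{j=1}^N ρ^n_j + α Δt (ρ^n_a + ρ^n_b), where ρ^n_a = ρ^n_0 and ρ^n_b = ρ^n_{N+1} are the boundary values. -/

import Mathlib

lemma tel_sum (g : ℤ → ℝ) (N : ℕ) :
    ∑ j ∈ Finset.Icc (1 : ℤ) (N : ℤ), (g (j + 1) - g j) = g ((N : ℤ) + 1) - g 1 := by
  induction N with
  | zero => simp
  | succ n ih =>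
    have hins : Finset.Icc (1 : ℤ) ((n : ℤ) + 1)
        = insert ((n : ℤ) + 1) (Finset.Icc (1 : ℤ) (n : ℤ)) := by
      ext x; simp [Finset.mem_Icc, Finset.mem_insert]; omega
    have hnot : ((n : ℤ) + 1) ∉ Finset.Icc (1 : ℤ) (n : ℤ) := by
      simp
    push_cast
    rw [hins, Finset.sum_insert hnot, ih]
    ring

theorem stmt9
    (L C α lam Δx Δt tn : ℝ) (N : ℕ)
    (hΔx : 0 < Δx) (hΔt : 0 < Δt) (hlam : lam = Δt / Δx)
    (f : ℝ → ℝ → ℝ → ℝ → ℝ)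
    (hf0 : ∀ t x R, f t x 0 R = 0)
    (hfρ : ∀ t x R, Differentiable ℝ (fun ρ => f t x ρ R))
    (hfρL : ∀ t x ρ R, |deriv (fun ρ => f t x ρ R) ρ| ≤ L)
    (hCFL1 : L ≤ α) (hCFL2 : lam * α ≤ 1 / 3)
    (xi : ℤ → ℝ) (hxi : ∀ j, xi (j + 1) = xi j + Δx)
    (R : ℤ → ℝ)
    (F : ℤ → ℝ → ℝ → ℝ)
    (hF : ∀ j u v,
      F j u v = (f tn (xi j) u (R j) + f tn (xi j) v (R j) - α * (v - u)) / 2)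
    (ρn ρn1 : ℤ → ℝ)
    (hpos : ∀ j ∈ Finset.Icc (0 : ℤ) ((N : ℤ) + 1), 0 ≤ ρn j)
    (hscheme : ∀ j ∈ Finset.Icc (1 : ℤ) (N : ℤ),
      ρn1 j = ρn j - lam * (F j (ρn j) (ρn (j + 1)) - F (j - 1) (ρn (j - 1)) (ρn j)))
    (hpos1 : ∀ j ∈ Finset.Icc (1 : ℤ) (N : ℤ), 0 ≤ ρn1 j) :
    Δx * ∑ j ∈ Finset.Icc (1 : ℤ) (N : ℤ), ρn1 j ≤
      Δx * ∑ j ∈ Finset.Icc (1 : ℤ) (N : ℤ), ρn j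
        + α * Δt * (ρn 0 + ρn ((N : ℤ) + 1)) := by
  have hL0 : 0 ≤ L := le_trans (abs_nonneg _) (hfρL tn (xi 0) 0 (R 0))
  have hα0 : 0 ≤ α := le_trans hL0 hCFL1
  -- |f tn x u R| ≤ α * u for u ≥ 0
  have hbound : ∀ x Rv u, 0 ≤ u → |f tn x u Rv| ≤ α * u := by
    intro x Rv u hu
    have hlip : |f tn x u Rv - f tn x 0 Rv| ≤ L * |u - 0| := by
      have := Convex.norm_image_sub_le_of_norm_deriv_le
        (f := fun ρ => f tn x ρ Rv) (s := Set.univ)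
        (fun y _ => hfρ tn x Rv y)
        (fun y _ => by
          simpa [Real.norm_eq_abs] using hfρL tn x y Rv)
        convex_univ (Set.mem_univ 0) (Set.mem_univ u)
      simpa [Real.norm_eq_abs, abs_sub_comm] using this
    calc |f tn x u Rv| = |f tn x u Rv - f tn x 0 Rv| := by rw [hf0]; ring_nf
      _ ≤ L * |u - 0| := hlip
      _ = L * u := by rw [sub_zero, abs_of_nonneg hu]
      _ ≤ α * u := mul_le_mul_of_nonneg_right hCFL1 hu
  -- telescoping sum
  set g : ℤ → ℝ := fun j => F (j - 1) (ρn (j - 1)) (ρn j) with hg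
  have hsum : ∑ j ∈ Finset.Icc (1 : ℤ) (N : ℤ), ρn1 j
      = ∑ j ∈ Finset.Icc (1 : ℤ) (N : ℤ), ρn j - lam * (g ((N : ℤ) + 1) - g 1) := by
    rw [← tel_sum g N, Finset.mul_sum, ← Finset.sum_sub_distrib]
    refine Finset.sum_congr rfl fun j hj => ?_
    rw [hscheme j hj]
    simp only [hg, add_sub_cancel_right]
  rw [hsum, mul_sub]
  have hlx : Δx * lam = Δt := by
    rw [hlam]; field_simp
  have key : -(Δt * (g ((N : ℤ) + 1) - g 1)) ≤ α * Δt * (ρn 0 + ρn ((N : ℤ) + 1)) := by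
    have h0 : 0 ≤ ρn 0 := hpos 0 (by simp only [Finset.mem_Icc]; omega)
    have h1 : 0 ≤ ρn 1 := hpos 1 (by simp only [Finset.mem_Icc]; omega)
    have hN : 0 ≤ ρn (N : ℤ) := hpos (N : ℤ) (by simp only [Finset.mem_Icc]; omega)
    have hN1 : 0 ≤ ρn ((N : ℤ) + 1) := hpos ((N : ℤ) + 1) (by simp only [Finset.mem_Icc]; omega)
    have hg1 : g 1 ≤ α * ρn 0 := by
      simp only [hg, hF]
      have b1 := (abs_le.mp (hbound (xi (1 - 1)) (R (1 - 1)) (ρn (1 - 1)) (by simpa using h0))).2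
      have b2 := (abs_le.mp (hbound (xi (1 - 1)) (R (1 - 1)) (ρn 1) h1)).2
      have : (1 : ℤ) - 1 = 0 := by ring
      rw [this] at b1 b2 ⊢
      nlinarith
    have hgN : -g ((N : ℤ) + 1) ≤ α * ρn ((N : ℤ) + 1) := by
      simp only [hg, hF]
      have heq : ((N : ℤ) + 1) - 1 = (N : ℤ) := by ring
      have b1 := (abs_le.mp (hbound (xi ((N : ℤ) + 1 - 1)) (R ((N : ℤ) + 1 - 1))
        (ρn ((N : ℤ) + 1 - 1)) (by rw [heq]; exact hN))).1
      have b2 := (abs_le.mp (hbound (xi ((N : ℤ) + 1 - 1)) (R ((N : ℤ) + 1 - 1))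
        (ρn ((N : ℤ) + 1)) hN1)).1
      rw [heq] at b1 b2 ⊢
      nlinarith
    calc -(Δt * (g ((N : ℤ) + 1) - g 1)) = Δt * (-g ((N : ℤ) + 1)) + Δt * g 1 := by ring
      _ ≤ Δt * (α * ρn ((N : ℤ) + 1)) + Δt * (α * ρn 0) := by
          have h1' := mul_le_mul_of_nonneg_left hgN hΔt.le
          have h2' := mul_le_mul_of_nonneg_left hg1 hΔt.le
          linarith
      _ = α * Δt * (ρn 0 + ρn ((N : ℤ) + 1)) := by ring
  have : Δx * (lam * (g ((N : ℤ) + 1) - g 1)) = Δt * (g ((N : ℤ) + 1) - g 1) := by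
    rw [← mul_assoc, hlx]
  rw [this]
  linarith [key]
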